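/- The class of lattices has the amalgamation property: whenever A, B₁, B₂ are lattices and f₁ : A → B₁ and f₂ : A → B₂ are injective lattice homomorphisms, there exist a lattice D and injective lattice homomorphisms g₁ : B₁ → D and g₂ : B₂ → D such that g₁ ∘ f₁ = g₂ ∘ f₂. -/

import Mathlib

open Set

namespace LatticeAmalgAux

variable {A B₁ B₂ : Type} [Lattice A] [Lattice B₁] [Lattice B₂]

/-- The amalgam relation on `B₁ ⊕ B₂`. -/
def amalgRel (f₁ : A → B₁) (f₂ : A → B₂) : B₁ ⊕ B₂ → B₁ ⊕ B₂ → Prop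
  | .inl x, .inl y => x ≤ y
  | .inr x, .inr y => x ≤ y
  | .inl x, .inr y => ∃ a, x ≤ f₁ a ∧ f₂ a ≤ y
  | .inr x, .inl y => ∃ a, x ≤ f₂ a ∧ f₁ a ≤ y

theorem le_iff_of_hom {B : Type} [Lattice B] {f : A → B} (hf : Function.Injective f)
    (hom : ∀ a b : A, f (a ⊔ b) = f a ⊔ f b) (a b : A) : f a ≤ f b ↔ a ≤ b := by
  constructor
  · intro h
    have h1 : f (a ⊔ b) = f b := by rw [hom a b, sup_eq_right.2 h]
    exact le_of_sup_eq (hf h1)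
  · intro h
    have h1 : f a ⊔ f b = f b := by rw [← hom a b, sup_eq_right.2 h]
    exact sup_eq_right.1 h1

theorem amalgRel_refl (f₁ : A → B₁) (f₂ : A → B₂) (p : B₁ ⊕ B₂) : amalgRel f₁ f₂ p p := by
  cases p <;> exact le_refl _

theorem amalgRel_trans {f₁ : A → B₁} {f₂ : A → B₂}
    (hf₁ : Function.Injective f₁) (hf₂ : Function.Injective f₂)
    (hom₁ : ∀ a b : A, f₁ (a ⊔ b) = f₁ a ⊔ f₁ b)
    (hom₂ : ∀ a b : A, f₂ (a ⊔ b) = f₂ a ⊔ f₂ b)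
    {p q r : B₁ ⊕ B₂} (h₁ : amalgRel f₁ f₂ p q) (h₂ : amalgRel f₁ f₂ q r) :
    amalgRel f₁ f₂ p r := by
  cases p <;> cases q <;> cases r <;> simp only [amalgRel] at *
  · exact h₁.trans h₂
  · obtain ⟨a, ha1, ha2⟩ := h₂; exact ⟨a, h₁.trans ha1, ha2⟩
  · obtain ⟨a, ha1, ha2⟩ := h₁; obtain ⟨a', hb1, hb2⟩ := h₂
    exact ha1.trans (((le_iff_of_hom hf₁ hom₁ a a').2
      ((le_iff_of_hom hf₂ hom₂ a a').1 (ha2.trans hb1))).trans hb2)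
  · obtain ⟨a, ha1, ha2⟩ := h₁; exact ⟨a, ha1, ha2.trans h₂⟩
  · obtain ⟨a, ha1, ha2⟩ := h₁; exact ⟨a, ha1, ha2.trans h₂⟩
  · obtain ⟨a, ha1, ha2⟩ := h₁; obtain ⟨a', hb1, hb2⟩ := h₂
    exact ha1.trans (((le_iff_of_hom hf₂ hom₂ a a').2
      ((le_iff_of_hom hf₁ hom₁ a a').1 (ha2.trans hb1))).trans hb2)
  · obtain ⟨a, ha1, ha2⟩ := h₂; exact ⟨a, h₁.trans ha1, ha2⟩
  · exact h₁.trans h₂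

/-- The principal concept at a point. -/
def toC {f₁ : A → B₁} {f₂ : A → B₂}
    (hf₁ : Function.Injective f₁) (hf₂ : Function.Injective f₂)
    (hom₁ : ∀ a b : A, f₁ (a ⊔ b) = f₁ a ⊔ f₁ b)
    (hom₂ : ∀ a b : A, f₂ (a ⊔ b) = f₂ a ⊔ f₂ b)
    (p : B₁ ⊕ B₂) : Concept (B₁ ⊕ B₂) (B₁ ⊕ B₂) (amalgRel f₁ f₂) where
  extent := {q | amalgRel f₁ f₂ q p}
  intent := {q | amalgRel f₁ f₂ p q}
  upperPolar_extent := by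
    ext q
    constructor
    · intro h; exact h (amalgRel_refl f₁ f₂ p)
    · intro h q' hq'; exact amalgRel_trans hf₁ hf₂ hom₁ hom₂ hq' h
  lowerPolar_intent := by
    ext q
    constructor
    · intro h; exact h (amalgRel_refl f₁ f₂ p)
    · intro h q' hq'; exact amalgRel_trans hf₁ hf₂ hom₁ hom₂ h hq'

theorem toC_fst {f₁ : A → B₁} {f₂ : A → B₂}
    (hf₁ : Function.Injective f₁) (hf₂ : Function.Injective f₂)
    (hom₁ : ∀ a b : A, f₁ (a ⊔ b) = f₁ a ⊔ f₁ b)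
    (hom₂ : ∀ a b : A, f₂ (a ⊔ b) = f₂ a ⊔ f₂ b)
    (p : B₁ ⊕ B₂) : (toC hf₁ hf₂ hom₁ hom₂ p).extent = {q | amalgRel f₁ f₂ q p} := rfl

end LatticeAmalgAux

open LatticeAmalgAux in
/-- The class of lattices has the amalgamation property. -/
theorem lattice_amalgamation (A B₁ B₂ : Type) [Lattice A] [Lattice B₁] [Lattice B₂]
    (f₁ : A → B₁) (f₂ : A → B₂)
    (hf₁ : Function.Injective f₁) (hf₂ : Function.Injective f₂)
    (hom₁ : ∀ a b : A, f₁ (a ⊔ b) = f₁ a ⊔ f₁ b ∧ f₁ (a ⊓ b) = f₁ a ⊓ f₁ b)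
    (hom₂ : ∀ a b : A, f₂ (a ⊔ b) = f₂ a ⊔ f₂ b ∧ f₂ (a ⊓ b) = f₂ a ⊓ f₂ b) :
    ∃ (D : Type) (_ : Lattice D) (g₁ : B₁ → D) (g₂ : B₂ → D),
      Function.Injective g₁ ∧ Function.Injective g₂ ∧
      (∀ a b : B₁, g₁ (a ⊔ b) = g₁ a ⊔ g₁ b ∧ g₁ (a ⊓ b) = g₁ a ⊓ g₁ b) ∧
      (∀ a b : B₂, g₂ (a ⊔ b) = g₂ a ⊔ g₂ b ∧ g₂ (a ⊓ b) = g₂ a ⊓ g₂ b) ∧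
      g₁ ∘ f₁ = g₂ ∘ f₂ := by
  classical
  have homs₁ : ∀ a b : A, f₁ (a ⊔ b) = f₁ a ⊔ f₁ b := fun a b => (hom₁ a b).1
  have homs₂ : ∀ a b : A, f₂ (a ⊔ b) = f₂ a ⊔ f₂ b := fun a b => (hom₂ a b).1
  have mono₁ : ∀ {a b : A}, a ≤ b → f₁ a ≤ f₁ b :=
    fun h => (le_iff_of_hom hf₁ homs₁ _ _).2 h
  have mono₂ : ∀ {a b : A}, a ≤ b → f₂ a ≤ f₂ b :=
    fun h => (le_iff_of_hom hf₂ homs₂ _ _).2 h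
  refine ⟨Concept (B₁ ⊕ B₂) (B₁ ⊕ B₂) (amalgRel f₁ f₂), inferInstance,
    fun x => toC hf₁ hf₂ homs₁ homs₂ (.inl x),
    fun x => toC hf₁ hf₂ homs₁ homs₂ (.inr x), ?_, ?_, ?_, ?_, ?_⟩
  · intro x y h
    have h' := congrArg (fun c => c.extent) h
    simp only [toC_fst] at h'
    have h1 : amalgRel f₁ f₂ (.inl x) (.inl y) :=
      (Set.ext_iff.1 h' (Sum.inl x)).1 (amalgRel_refl f₁ f₂ (Sum.inl x))
    have h2 : amalgRel f₁ f₂ (.inl y) (.inl x) :=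
      (Set.ext_iff.1 h' (Sum.inl y)).2 (amalgRel_refl f₁ f₂ (Sum.inl y))
    exact le_antisymm h1 h2
  · intro x y h
    have h' := congrArg (fun c => c.extent) h
    simp only [toC_fst] at h'
    have h1 : amalgRel f₁ f₂ (.inr x) (.inr y) :=
      (Set.ext_iff.1 h' (Sum.inr x)).1 (amalgRel_refl f₁ f₂ (Sum.inr x))
    have h2 : amalgRel f₁ f₂ (.inr y) (.inr x) :=
      (Set.ext_iff.1 h' (Sum.inr y)).2 (amalgRel_refl f₁ f₂ (Sum.inr y))
    exact le_antisymm h1 h2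
  · intro x y
    constructor
    · apply Concept.ext'
      show ({q | amalgRel f₁ f₂ (.inl (x ⊔ y)) q} : Set _)
        = {q | amalgRel f₁ f₂ (.inl x) q} ∩ {q | amalgRel f₁ f₂ (.inl y) q}
      ext q
      cases q with
      | inl w => simpa [amalgRel] using sup_le_iff
      | inr w =>
        simp only [amalgRel, mem_setOf_eq, mem_inter_iff]
        constructor
        · rintro ⟨a, h1, h2⟩
          exact ⟨⟨a, le_sup_left.trans h1, h2⟩, ⟨a, le_sup_right.trans h1, h2⟩⟩
        · rintro ⟨⟨a, h1, h2⟩, ⟨a', h1', h2'⟩⟩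
          refine ⟨a ⊔ a', sup_le (h1.trans (mono₁ le_sup_left)) (h1'.trans (mono₁ le_sup_right)), ?_⟩
          rw [(hom₂ a a').1]
          exact sup_le h2 h2'
    · apply Concept.ext
      show ({q | amalgRel f₁ f₂ q (.inl (x ⊓ y))} : Set _)
        = {q | amalgRel f₁ f₂ q (.inl x)} ∩ {q | amalgRel f₁ f₂ q (.inl y)}
      ext q
      cases q with
      | inl w => simpa [amalgRel] using le_inf_iff
      | inr w =>
        simp only [amalgRel, mem_setOf_eq, mem_inter_iff]
        constructor
        · rintro ⟨a, h1, h2⟩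
          exact ⟨⟨a, h1, h2.trans inf_le_left⟩, ⟨a, h1, h2.trans inf_le_right⟩⟩
        · rintro ⟨⟨a, h1, h2⟩, ⟨a', h1', h2'⟩⟩
          refine ⟨a ⊓ a', ?_, ?_⟩
          · rw [(hom₂ a a').2]
            exact le_inf h1 h1'
          · exact le_inf ((mono₁ inf_le_left).trans h2) ((mono₁ inf_le_right).trans h2')
  · intro x y
    constructor
    · apply Concept.ext'
      show ({q | amalgRel f₁ f₂ (.inr (x ⊔ y)) q} : Set _)
        = {q | amalgRel f₁ f₂ (.inr x) q} ∩ {q | amalgRel f₁ f₂ (.inr y) q}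
      ext q
      cases q with
      | inr w => simpa [amalgRel] using sup_le_iff
      | inl w =>
        simp only [amalgRel, mem_setOf_eq, mem_inter_iff]
        constructor
        · rintro ⟨a, h1, h2⟩
          exact ⟨⟨a, le_sup_left.trans h1, h2⟩, ⟨a, le_sup_right.trans h1, h2⟩⟩
        · rintro ⟨⟨a, h1, h2⟩, ⟨a', h1', h2'⟩⟩
          refine ⟨a ⊔ a', sup_le (h1.trans (mono₂ le_sup_left)) (h1'.trans (mono₂ le_sup_right)), ?_⟩
          rw [(hom₁ a a').1]
          exact sup_le h2 h2'
    · apply Concept.ext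
      show ({q | amalgRel f₁ f₂ q (.inr (x ⊓ y))} : Set _)
        = {q | amalgRel f₁ f₂ q (.inr x)} ∩ {q | amalgRel f₁ f₂ q (.inr y)}
      ext q
      cases q with
      | inr w => simpa [amalgRel] using le_inf_iff
      | inl w =>
        simp only [amalgRel, mem_setOf_eq, mem_inter_iff]
        constructor
        · rintro ⟨a, h1, h2⟩
          exact ⟨⟨a, h1, h2.trans inf_le_left⟩, ⟨a, h1, h2.trans inf_le_right⟩⟩
        · rintro ⟨⟨a, h1, h2⟩, ⟨a', h1', h2'⟩⟩
          refine ⟨a ⊓ a', ?_, ?_⟩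
          · rw [(hom₁ a a').2]
            exact le_inf h1 h1'
          · exact le_inf ((mono₂ inf_le_left).trans h2) ((mono₂ inf_le_right).trans h2')
  · funext a
    apply Concept.ext
    show ({q | amalgRel f₁ f₂ q (.inl (f₁ a))} : Set _) = {q | amalgRel f₁ f₂ q (.inr (f₂ a))}
    ext q
    cases q with
    | inl w =>
      simp only [amalgRel, mem_setOf_eq]
      exact ⟨fun h => ⟨a, h, le_refl _⟩,
        fun ⟨a', h1, h2⟩ => h1.trans (mono₁ ((le_iff_of_hom hf₂ homs₂ _ _).1 h2))⟩
    | inr w =>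
      simp only [amalgRel, mem_setOf_eq]
      exact ⟨fun ⟨a', h1, h2⟩ => h1.trans (mono₂ ((le_iff_of_hom hf₁ homs₁ _ _).1 h2)),
        fun h => ⟨a, h, le_refl _⟩⟩
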